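/- Let ζ₁,…,ζₙ be distinct complex numbers with positive imaginary parts, and set c_{jk} = i/(ζ_k - ζ_j*). Then the n×n determinant obtained from [c_{i_b i_a}]_{a,b=1}^n (entry in row a, column b equal to c_{i_b i_a}) by replacing its last row with a row of all 1's equals ∏_{l=1}^{n-1} ((ζ_{i_l}* - ζ_{i_n}*)/(ζ_{i_l} - ζ_{i_n}*)) times the (n-1)×(n-1) determinant det[c_{i_b i_a}]_{a,b=1}^{n-1}. -/

import Mathlib

open Complex Matrix BigOperators

noncomputable section

theorem stmt4 {n : ℕ} (ζ : Fin (n+1) → ℂ) (hinj : Function.Injective ζ)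
    (him : ∀ j, 0 < (ζ j).im) :
    -- matrix with (a,b) entry c_{i_b i_a} = i/(ζ_{i_a} - ζ_{i_b}*), last row replaced by 1's
    Matrix.det (fun a b : Fin (n+1) =>
        if a = Fin.last n then 1 else Complex.I / (ζ a - (starRingEnd ℂ) (ζ b)))
      = (∏ l : Fin n, ((starRingEnd ℂ) (ζ l.castSucc) - (starRingEnd ℂ) (ζ (Fin.last n))) /
          (ζ l.castSucc - (starRingEnd ℂ) (ζ (Fin.last n)))) *
        Matrix.det (fun a b : Fin n =>
          Complex.I / (ζ a.castSucc - (starRingEnd ℂ) (ζ b.castSucc))) := by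
  have hne : ∀ a b : Fin (n+1), ζ a - (starRingEnd ℂ) (ζ b) ≠ 0 := by
    intro a b h
    have h2 : (ζ a - (starRingEnd ℂ) (ζ b)).im = 0 := by rw [h]; simp
    simp only [Complex.sub_im, Complex.conj_im, sub_neg_eq_add] at h2
    nlinarith [him a, him b]
  set L := Fin.last n with hL
  set M : Matrix (Fin (n+1)) (Fin (n+1)) ℂ := fun a b =>
    if a = L then 1 else Complex.I / (ζ a - (starRingEnd ℂ) (ζ b)) with hM
  set E : Matrix (Fin (n+1)) (Fin (n+1)) ℂ := Matrix.of fun k j =>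
    if k = j then 1 else if k = L then -1 else 0 with hE
  have hdetE : E.det = 1 := by
    rw [Matrix.det_of_lowerTriangular E ?_]
    · simp [hE]
    · intro i j hij
      have hij' : i < j := hij
      have h1 : i ≠ j := hij'.ne
      have h2 : i ≠ L := (hij'.trans_le (Fin.le_last j)).ne
      simp [hE, h1, h2]
  set M₂ : Matrix (Fin (n+1)) (Fin (n+1)) ℂ := Matrix.of fun i j =>
    if j = L then M i L else M i j - M i L with hM₂
  have hME : M * E = M₂ := by
    ext i j
    by_cases hj : j = L
    · subst hj
      simp only [Matrix.mul_apply, hE, Matrix.of_apply]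
      rw [Finset.sum_eq_single L]
      · simp [hM₂]
      · intro k _ hk; simp [hk]
      · simp
    · have hsplit : ∀ k, (E k j) = (if k = j then (1:ℂ) else 0) + (if k = L then -1 else 0) := by
        intro k
        by_cases h1 : k = j
        · subst h1; simp [hE, hj]
        · by_cases h2 : k = L <;> simp [hE, h1, h2, Ne.symm hj]
      simp only [Matrix.mul_apply]
      rw [Finset.sum_congr rfl fun k _ => by rw [hsplit k]]
      simp only [mul_add, Finset.sum_add_distrib, mul_ite, mul_one, mul_zero, mul_neg,
        Finset.sum_ite_eq', Finset.mem_univ, if_true]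
      simp [hM₂, hj, sub_eq_add_neg]
  have hdet1 : M.det = M₂.det := by
    rw [← hME, Matrix.det_mul, hdetE, mul_one]
  have hrow : ∀ j, M₂ L j = if j = L then 1 else 0 := by
    intro j
    by_cases hj : j = L <;> simp [hM₂, hM, hj]
  have hdet2 : M₂.det = (M₂.submatrix Fin.castSucc Fin.castSucc).det := by
    rw [Matrix.det_succ_row M₂ L]
    rw [Finset.sum_eq_single L]
    · rw [hrow L]
      simp only [if_true, mul_one, hL]
      rw [Fin.succAbove_last]
      have : (-1 : ℂ) ^ ((Fin.last n : ℕ) + (Fin.last n : ℕ)) = 1 := by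
        simp [Fin.val_last, ← two_mul, pow_mul]
      rw [this, one_mul]
    · intro j _ hjL
      rw [hrow j]
      simp [hjL]
    · simp
  have hentry : ∀ a b : Fin n, M₂ a.castSucc b.castSucc =
      ((ζ a.castSucc - (starRingEnd ℂ) (ζ L))⁻¹) *
        (((starRingEnd ℂ) (ζ b.castSucc) - (starRingEnd ℂ) (ζ L)) *
          (Complex.I / (ζ a.castSucc - (starRingEnd ℂ) (ζ b.castSucc)))) := by
    intro a b
    have haL : (a.castSucc : Fin (n+1)) ≠ L := Fin.castSucc_lt_last a |>.ne
    have hbL : (b.castSucc : Fin (n+1)) ≠ L := Fin.castSucc_lt_last b |>.ne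
    simp only [hM₂, hM, Matrix.of_apply, if_neg hbL, if_neg haL]
    have h1 := hne a.castSucc b.castSucc
    have h2 := hne a.castSucc L
    field_simp
    ring
  calc M.det = M₂.det := hdet1
    _ = (M₂.submatrix Fin.castSucc Fin.castSucc).det := hdet2
    _ = _ := by
        have : M₂.submatrix Fin.castSucc Fin.castSucc =
            Matrix.of fun a b : Fin n => ((ζ a.castSucc - (starRingEnd ℂ) (ζ L))⁻¹) *
              (Matrix.of fun a b : Fin n =>
                (((starRingEnd ℂ) (ζ b.castSucc) - (starRingEnd ℂ) (ζ L)) *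
                  (Complex.I / (ζ a.castSucc - (starRingEnd ℂ) (ζ b.castSucc))))) a b := by
          ext a b; exact hentry a b
        rw [this, Matrix.det_mul_column]
        have hrowdet := Matrix.det_mul_row (fun b : Fin n => (starRingEnd ℂ) (ζ b.castSucc) - (starRingEnd ℂ) (ζ L))
          (Matrix.of fun a b : Fin n => Complex.I / (ζ a.castSucc - (starRingEnd ℂ) (ζ b.castSucc)))
        simp only [Matrix.of_apply] at hrowdet
        rw [hrowdet]
        rw [← mul_assoc, ← Finset.prod_mul_distrib]
        congr 1
        refine Finset.prod_congr rfl fun l _ => ?_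
        rw [div_eq_mul_inv, mul_comm]
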